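/- Let V be a finite nonempty type and let G be a connected simple graph on V. Then G contains a cycle (i.e., G is not acyclic) if and only if there exists a labeling L : V → ℕ such that every vertex v satisfies the n-label acceptance condition: either L v = 0, v has at least two neighbors u with L u = 0, and every neighbor w of v has L w ≤ 1; or L v ≠ 0, exactly one neighbor u of v has L u = L v - 1, and every other neighbor w of v has L w = L v + 1. -/

import Mathlib

/-- A vertex `v` satisfies the n-label acceptance condition with respect to graph
`G` and labeling `L : V → ℕ`. -/
def AcceptN {V : Type*} (G : SimpleGraph V) (L : V → ℕ) (v : V) : Prop :=
  (L v = 0 ∧ (∃ u w, u ≠ w ∧ G.Adj v u ∧ G.Adj v w ∧ L u = 0 ∧ L w = 0) ∧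
      (∀ w, G.Adj v w → L w ≤ 1)) ∨
  (L v ≠ 0 ∧ (∃ u, G.Adj v u ∧ L u = L v - 1 ∧
      (∀ w, G.Adj v w → w ≠ u → L w = L v + 1)))

namespace CycleDetectAux

open SimpleGraph

variable {V : Type*} {G : SimpleGraph V}

/-- A set where every vertex has two distinct neighbors inside the set. -/
def Good (G : SimpleGraph V) (S : Set V) : Prop :=
  ∀ v ∈ S, ∃ u w, u ≠ w ∧ G.Adj v u ∧ G.Adj v w ∧ u ∈ S ∧ w ∈ S

lemma getVert_mem_support {u v : V} (p : G.Walk u v) (i : ℕ) :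
    p.getVert i ∈ p.support := by
  induction p generalizing i with
  | nil => simp [SimpleGraph.Walk.getVert]
  | cons h q ih =>
    cases i with
    | zero => simp [SimpleGraph.Walk.getVert]
    | succ n =>
      simp only [SimpleGraph.Walk.support_cons, List.mem_cons]
      exact Or.inr (ih n)

lemma eq_getVert_one_of_mem_edges {v t x : V} {p : G.Walk v t} (hp : p.IsPath)
    (he : s(v, x) ∈ p.edges) : x = p.getVert 1 := by
  cases p with
  | nil => simp at he
  | cons h q =>
    simp only [SimpleGraph.Walk.edges_cons, List.mem_cons] at he
    rcases he with he | he
    · have hx : x = _ := Sym2.congr_right.mp he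
      have : (SimpleGraph.Walk.cons h q).getVert 1 = q.getVert 0 := rfl
      rw [this, SimpleGraph.Walk.getVert_zero]
      exact hx
    · exfalso
      have hv : v ∈ q.support := q.fst_mem_support_of_mem_edges he
      exact ((SimpleGraph.Walk.cons_isPath_iff h q).mp hp).2 hv

lemma end_mem_support_tail {u v : V} (p : G.Walk u v) (hp : ¬ p.Nil) :
    v ∈ p.support.tail := by
  cases p with
  | nil => simp at hp
  | cons h q => simpa using q.end_mem_support

/-- A nonempty set where every vertex has two distinct neighbors inside the set
forces a cycle. -/
lemma not_acyclic_of_good [Fintype V] [DecidableEq V] {S : Set V}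
    (hS : Good G S) (hne : S.Nonempty) : ¬ G.IsAcyclic := by
  intro hac
  obtain ⟨v₀, hv₀⟩ := hne
  have key : ∀ n : ℕ, ∃ (a b : V) (p : G.Walk a b),
      p.IsPath ∧ (∀ x ∈ p.support, x ∈ S) ∧ p.length = n := by
    intro n
    induction n with
    | zero =>
      refine ⟨v₀, v₀, SimpleGraph.Walk.nil, SimpleGraph.Walk.IsPath.nil, ?_, rfl⟩
      intro x hx
      simp only [SimpleGraph.Walk.support_nil, List.mem_singleton] at hx
      exact hx ▸ hv₀
    | succ n ih =>
      obtain ⟨a, b, p, hp, hsupp, hlen⟩ := ih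
      obtain ⟨u, w, huw, hau, haw, huS, hwS⟩ := hS a (hsupp a p.start_mem_support)
      obtain ⟨x, hxadj, hxS, hxsnd⟩ :
          ∃ x, G.Adj a x ∧ x ∈ S ∧ x ≠ p.getVert 1 := by
        by_cases h : u = p.getVert 1
        · exact ⟨w, haw, hwS, fun hw => huw (by rw [h, hw])⟩
        · exact ⟨u, hau, huS, h⟩
      by_cases hmem : x ∈ p.support
      · exfalso
        have htp : (p.takeUntil x hmem).IsPath := hp.takeUntil hmem
        have hcyc : (SimpleGraph.Walk.cons hxadj.symm (p.takeUntil x hmem)).IsCycle := by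
          rw [SimpleGraph.Walk.cons_isCycle_iff]
          refine ⟨htp, fun he => ?_⟩
          have he' : s(a, x) ∈ p.edges := by
            have h2 := SimpleGraph.Walk.edges_takeUntil_subset p hmem he
            rwa [Sym2.eq_swap] at h2
          exact hxsnd (eq_getVert_one_of_mem_edges hp he')
        exact hac _ hcyc
      · refine ⟨x, b, SimpleGraph.Walk.cons hxadj.symm p, ?_, ?_, ?_⟩
        · exact (SimpleGraph.Walk.cons_isPath_iff _ _).mpr ⟨hp, hmem⟩
        · intro y hy
          simp only [SimpleGraph.Walk.support_cons, List.mem_cons] at hy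
          rcases hy with rfl | hy
          · exact hxS
          · exact hsupp y hy
        · simp [hlen]
  obtain ⟨a, b, p, hp, -, hlen⟩ := key (Fintype.card V)
  have := hp.length_lt
  omega

/-- The support of a cycle is a `Good` set. -/
lemma good_of_cycle [DecidableEq V] {a : V} {c : G.Walk a a} (hc : c.IsCycle) :
    Good G {x | x ∈ c.support} := by
  intro v hv
  have hv' : v ∈ c.support := hv
  have hc' : (c.rotate v hv').IsCycle := hc.rotate hv'
  have hsub : ∀ y, y ∈ (c.rotate v hv').support → y ∈ c.support := by
    intro y hy
    rw [SimpleGraph.Walk.support_eq_cons] at hy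
    rcases List.mem_cons.mp hy with rfl | hy
    · exact hv'
    · exact List.mem_of_mem_tail ((SimpleGraph.Walk.support_rotate c v hv').mem_iff.mp hy)
  have hnn : ¬ (c.rotate v hv').Nil := hc'.not_nil
  obtain ⟨u₁, hadj₁, q, hq⟩ := SimpleGraph.Walk.not_nil_iff.mp hnn
  have hqnodup : q.support.Nodup := by
    have hnod := hc'.support_nodup
    rw [hq] at hnod
    simpa using hnod
  have hqpath : q.IsPath := (SimpleGraph.Walk.isPath_def q).mpr hqnodup
  have hq2 : 2 ≤ q.length := by
    have h3 := hc'.three_le_length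
    rw [hq] at h3
    simp only [SimpleGraph.Walk.length_cons] at h3
    omega
  have hqrnn : ¬ q.reverse.Nil := by
    rw [SimpleGraph.Walk.not_nil_iff_lt_length, SimpleGraph.Walk.length_reverse]
    omega
  obtain ⟨u₂, hadj₂, r, hr⟩ := SimpleGraph.Walk.not_nil_iff.mp hqrnn
  have hu₂q : u₂ ∈ q.support := by
    have : u₂ ∈ q.reverse.support := by
      rw [hr]
      simp only [SimpleGraph.Walk.support_cons, List.mem_cons]
      exact Or.inr r.start_mem_support
    rwa [SimpleGraph.Walk.support_reverse, List.mem_reverse] at this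
  have hu₁q : u₁ ∈ q.support := q.start_mem_support
  have hne12 : u₁ ≠ u₂ := by
    intro h
    subst h
    have hrpath : (SimpleGraph.Walk.cons hadj₂ r).IsPath := by
      rw [← hr]; exact hqpath.reverse
    have hrp : r.IsPath := ((SimpleGraph.Walk.cons_isPath_iff _ _).mp hrpath).1
    have hr0 : r.length = 0 := by
      by_contra h0
      have hrnn : ¬ r.Nil := by
        rw [SimpleGraph.Walk.not_nil_iff_lt_length]; omega
      have hmem := end_mem_support_tail r hrnn
      have := hrp.support_nodup
      rw [SimpleGraph.Walk.support_eq_cons] at this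
      exact (List.nodup_cons.mp this).1 hmem
    have : q.reverse.length = 1 := by rw [hr]; simp [hr0]
    rw [SimpleGraph.Walk.length_reverse] at this
    omega
  have hmemc : ∀ y, y ∈ q.support → y ∈ c.support := by
    intro y hy
    apply hsub
    rw [hq]
    simp only [SimpleGraph.Walk.support_cons, List.mem_cons]
    exact Or.inr hy
  exact ⟨u₁, u₂, hne12, hadj₁, hadj₂, hmemc u₁ hu₁q, hmemc u₂ hu₂q⟩

/-- The union of all `Good` sets: vertices on cycles or paths between cycles. -/
def ZSet (G : SimpleGraph V) : Set V := {v | ∃ S, Good G S ∧ v ∈ S}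

lemma good_ZSet : Good G (ZSet G) := by
  rintro v ⟨S, hS, hv⟩
  obtain ⟨u, w, huw, h1, h2, hu, hw⟩ := hS v hv
  exact ⟨u, w, huw, h1, h2, ⟨S, hS, hu⟩, ⟨S, hS, hw⟩⟩

/-- Distance to the set `ZSet G`. -/
noncomputable def lab (G : SimpleGraph V) (v : V) : ℕ := sInf (G.dist v '' ZSet G)

lemma lab_le {z v : V} (hz : z ∈ ZSet G) : lab G v ≤ G.dist v z :=
  Nat.sInf_le ⟨z, hz, rfl⟩

lemma lab_spec (hne : (ZSet G).Nonempty) (v : V) :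
    ∃ z ∈ ZSet G, G.dist v z = lab G v := by
  obtain ⟨z, hz, hd⟩ := Nat.sInf_mem (hne.image (G.dist v))
  exact ⟨z, hz, hd⟩

lemma lab_eq_zero {v : V} (hv : v ∈ ZSet G) : lab G v = 0 := by
  have h := lab_le (v := v) hv
  rw [SimpleGraph.dist_self] at h
  omega

lemma mem_of_lab_eq_zero (hconn : G.Connected) (hne : (ZSet G).Nonempty) {v : V}
    (h0 : lab G v = 0) : v ∈ ZSet G := by
  obtain ⟨z, hz, hd⟩ := lab_spec hne v
  rw [h0] at hd
  rwa [hconn.dist_eq_zero_iff.mp hd]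

lemma lab_adj (hconn : G.Connected) (hne : (ZSet G).Nonempty) {v w : V}
    (h : G.Adj v w) : lab G v ≤ lab G w + 1 := by
  obtain ⟨z, hz, hd⟩ := lab_spec hne w
  calc lab G v ≤ G.dist v z := lab_le hz
    _ ≤ G.dist v w + G.dist w z := hconn.dist_triangle
    _ = 1 + lab G w := by rw [hd, SimpleGraph.dist_eq_one_iff_adj.mpr h]
    _ = lab G w + 1 := by omega

lemma path_interior [DecidableEq V] {a b x : V} {q : G.Walk a b} (hq : q.IsPath) (hx : x ∈ q.support)
    (hxa : x ≠ a) (hxb : x ≠ b) :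
    ∃ y₁ y₂, y₁ ≠ y₂ ∧ G.Adj x y₁ ∧ G.Adj x y₂ ∧ y₁ ∈ q.support ∧ y₂ ∈ q.support := by
  set t := q.takeUntil x hx with ht
  set d := q.dropUntil x hx with hd
  have htd : t.append d = q := q.take_spec hx
  have htnn : ¬ t.reverse.Nil := SimpleGraph.Walk.not_nil_of_ne hxa
  have hdnn : ¬ d.Nil := SimpleGraph.Walk.not_nil_of_ne hxb
  have h1 : t.reverse.getVert 1 ∈ t.support := by
    have hm := getVert_mem_support t.reverse 1
    rwa [SimpleGraph.Walk.support_reverse, List.mem_reverse] at hm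
  refine ⟨t.reverse.getVert 1, d.getVert 1, ?_, t.reverse.adj_snd htnn,
    d.adj_snd hdnn, ?_, ?_⟩
  · have hnod : (t.support ++ d.support.tail).Nodup := by
      have hn := hq
      rw [SimpleGraph.Walk.isPath_def, ← htd, SimpleGraph.Walk.support_append] at hn
      exact hn
    have hdisj := List.disjoint_of_nodup_append hnod
    intro heq
    have h2 : d.getVert 1 ∈ d.support.tail := by
      have hm := getVert_mem_support d 1
      rw [SimpleGraph.Walk.support_eq_cons] at hm
      rcases List.mem_cons.mp hm with h | h
      · exact absurd h.symm (d.adj_snd hdnn).ne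
      · exact h
    exact hdisj h1 (heq ▸ h2)
  · exact SimpleGraph.Walk.support_takeUntil_subset q hx h1
  · exact SimpleGraph.Walk.support_dropUntil_subset q hx (getVert_mem_support d 1)

lemma good_on_path [DecidableEq V] {S : Set V} {u z v x : V} {q : G.Walk u z} (hq : q.IsPath)
    (hvq : v ∉ q.support) (hadj : G.Adj v u) (hz : z ∈ ZSet G)
    (hx : x ∈ q.support) (hxZ : x ∉ ZSet G)
    (hsub : ∀ y ∈ q.support, y ∈ S) (hvS : v ∈ S) :
    ∃ y₁ y₂, y₁ ≠ y₂ ∧ G.Adj x y₁ ∧ G.Adj x y₂ ∧ y₁ ∈ S ∧ y₂ ∈ S := by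
  have hxz : x ≠ z := fun h => hxZ (h ▸ hz)
  by_cases hxu : x = u
  · subst hxu
    have hnn : ¬ q.Nil := SimpleGraph.Walk.not_nil_of_ne hxz
    refine ⟨v, q.getVert 1, ?_, hadj.symm, q.adj_snd hnn, hvS,
      hsub _ (getVert_mem_support q 1)⟩
    intro h
    exact hvq (h ▸ getVert_mem_support q 1)
  · obtain ⟨y₁, y₂, h12, ha1, ha2, hy1, hy2⟩ := path_interior hq hx hxu hxz
    exact ⟨y₁, y₂, h12, ha1, ha2, hsub _ hy1, hsub _ hy2⟩

/-- Crucial lemma: a vertex outside `ZSet` cannot have two distinct neighbors both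
at label at most its own label. -/
lemma crux [DecidableEq V] (hconn : G.Connected) (hne : (ZSet G).Nonempty) {v u w : V}
    (hv : v ∉ ZSet G) (huw : u ≠ w) (hu : G.Adj v u) (hw : G.Adj v w)
    (hLu : lab G u ≤ lab G v) (hLw : lab G w ≤ lab G v) : False := by
  obtain ⟨zu, hzu, hdu⟩ := lab_spec hne u
  obtain ⟨zw, hzw, hdw⟩ := lab_spec hne w
  obtain ⟨pu0, hpu0⟩ := hconn.exists_walk_length_eq_dist u zu
  obtain ⟨pw0, hpw0⟩ := hconn.exists_walk_length_eq_dist w zw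
  set qu := pu0.bypass with hqu_def
  set qw := pw0.bypass with hqw_def
  have hqu : qu.IsPath := pu0.bypass_isPath
  have hqw : qw.IsPath := pw0.bypass_isPath
  have hqulen : qu.length ≤ lab G v := by
    have h := pu0.length_bypass_le
    rw [hqu_def]
    omega
  have hqwlen : qw.length ≤ lab G v := by
    have h := pw0.length_bypass_le
    rw [hqw_def]
    omega
  have key : ∀ (y : V) (hy : G.Adj v y) (zy : V) (hzy : zy ∈ ZSet G)
      (q : G.Walk y zy), q.length ≤ lab G v → v ∉ q.support := by
    intro y hy zy hzy q hql hmem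
    have h1 : 1 ≤ (q.takeUntil v hmem).length := by
      by_contra h
      have h0 : (q.takeUntil v hmem).length = 0 := by omega
      exact hy.ne (SimpleGraph.Walk.eq_of_length_eq_zero h0).symm
    have h2 : (q.takeUntil v hmem).length + (q.dropUntil v hmem).length = q.length := by
      rw [← SimpleGraph.Walk.length_append, SimpleGraph.Walk.take_spec]
    have h3 : lab G v ≤ (q.dropUntil v hmem).length :=
      le_trans (lab_le hzy) (SimpleGraph.dist_le _)
    omega
  have hvqu : v ∉ qu.support := key u hu zu hzu qu hqulen
  have hvqw : v ∉ qw.support := key w hw zw hzw qw hqwlen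
  set S : Set V := ZSet G ∪ {v} ∪ {x | x ∈ qu.support} ∪ {x | x ∈ qw.support} with hS
  have hvS : v ∈ S := by
    rw [hS]; left; left; right; rfl
  have hZsubS : ∀ y ∈ ZSet G, y ∈ S := by
    intro y hy; rw [hS]; left; left; left; exact hy
  have hqusubS : ∀ y ∈ qu.support, y ∈ S := by
    intro y hy; rw [hS]; left; right; exact hy
  have hqwsubS : ∀ y ∈ qw.support, y ∈ S := by
    intro y hy; rw [hS]; right; exact hy
  have hgood : Good G S := by
    intro x hx
    by_cases hxZ : x ∈ ZSet G
    · obtain ⟨y₁, y₂, h12, ha1, ha2, hy1, hy2⟩ := good_ZSet x hxZ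
      exact ⟨y₁, y₂, h12, ha1, ha2, hZsubS _ hy1, hZsubS _ hy2⟩
    by_cases hxv : x = v
    · subst hxv
      exact ⟨u, w, huw, hu, hw, hqusubS _ qu.start_mem_support,
        hqwsubS _ qw.start_mem_support⟩
    rw [hS] at hx
    rcases hx with ((hx | hx) | hx) | hx
    · exact absurd hx hxZ
    · exact absurd hx hxv
    · exact good_on_path hqu hvqu hu hzu hx hxZ hqusubS hvS
    · exact good_on_path hqw hvqw hw hzw hx hxZ hqwsubS hvS
  exact hv ⟨S, hgood, hvS⟩

end CycleDetectAux

open CycleDetectAux SimpleGraph in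
/-- A connected graph contains a cycle iff it admits a labeling accepted everywhere
by the n-label cycle-detection verifier. -/
theorem cycle_detection_n_labels
    (V : Type*) [Fintype V] [Nonempty V] (G : SimpleGraph V) (hconn : G.Connected) :
    ¬ G.IsAcyclic ↔ ∃ L : V → ℕ, ∀ v : V, AcceptN G L v := by
  classical
  constructor
  · intro hnac
    have hcyc : ∃ (a : V) (c : G.Walk a a), c.IsCycle := by
      by_contra h
      push_neg at h
      exact hnac fun a c hc => h a c hc
    obtain ⟨a, c, hc⟩ := hcyc
    have hne : (ZSet G).Nonempty :=
      ⟨a, {x | x ∈ c.support}, good_of_cycle hc, c.start_mem_support⟩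
    refine ⟨lab G, fun v => ?_⟩
    by_cases hv : v ∈ ZSet G
    · left
      refine ⟨lab_eq_zero hv, ?_, ?_⟩
      · obtain ⟨u, w, huw, h1, h2, hu, hw⟩ := good_ZSet v hv
        exact ⟨u, w, huw, h1, h2, lab_eq_zero hu, lab_eq_zero hw⟩
      · intro w hwadj
        calc lab G w ≤ G.dist w v := lab_le hv
          _ ≤ 1 := le_of_eq (SimpleGraph.dist_eq_one_iff_adj.mpr hwadj.symm)
    · right
      have h0 : lab G v ≠ 0 := fun h => hv (mem_of_lab_eq_zero hconn hne h)
      obtain ⟨z, hz, hd⟩ := lab_spec hne v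
      have hvz : v ≠ z := fun h => hv (h ▸ hz)
      obtain ⟨p, hplen⟩ := hconn.exists_walk_length_eq_dist v z
      have hnn : ¬ p.Nil := SimpleGraph.Walk.not_nil_of_ne hvz
      have hadj : G.Adj v (p.getVert 1) := p.adj_snd hnn
      have hLu : lab G (p.getVert 1) = lab G v - 1 := by
        have htl : p.tail.length + 1 = p.length := SimpleGraph.Walk.length_tail_add_one hnn
        have hdist : G.dist (p.getVert 1) z ≤ p.tail.length := SimpleGraph.dist_le p.tail
        have h1 : lab G (p.getVert 1) ≤ G.dist (p.getVert 1) z := lab_le hz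
        have h2 : lab G v ≤ lab G (p.getVert 1) + 1 := lab_adj hconn hne hadj
        omega
      refine ⟨h0, p.getVert 1, hadj, hLu, ?_⟩
      intro w hwadj hwu
      have hle : lab G w ≤ lab G v + 1 := lab_adj hconn hne hwadj.symm
      have hge : lab G v + 1 ≤ lab G w := by
        by_contra h
        push_neg at h
        exact crux hconn hne hv hwu hwadj hadj (by omega) (by omega)
      omega
  · rintro ⟨L, hL⟩
    have hne : Set.Nonempty {v | L v = 0} := by
      obtain ⟨v, -, hmin⟩ := Finset.exists_min_image Finset.univ L
        ⟨Classical.arbitrary V, Finset.mem_univ _⟩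
      refine ⟨v, ?_⟩
      rcases hL v with ⟨h0, -, -⟩ | ⟨h0, u, hadj, hu, -⟩
      · exact h0
      · exfalso
        have := hmin u (Finset.mem_univ u)
        omega
    have hgood : Good G {v | L v = 0} := by
      intro v hv
      rcases hL v with ⟨-, ⟨u, w, huw, h1, h2, hu, hw⟩, -⟩ | ⟨h0, -⟩
      · exact ⟨u, w, huw, h1, h2, hu, hw⟩
      · exact absurd hv h0
    exact not_acyclic_of_good hgood hne
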